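/- Let H be a weak Hopf algebra with H = H_t. Then every left partial H-module coalgebra is a left H-module coalgebra (via the same action map). -/
import Mathlib


open TensorProduct Coalgebra

noncomputable section

variable (k : Type*) [Field k]

section WeakHopfDefs

variable (H : Type*) [Ring H] [Algebra k H] [Coalgebra k H]

/-- The target map `ε_t(h) = ε(1₁ h) 1₂` of a weak bialgebra. -/
def wεt (h : H) : H :=
  (TensorProduct.lid k H)
    ((TensorProduct.map (counit (R := k) ∘ₗ LinearMap.mulRight k h) (LinearMap.id))
      (comul (R := k) (1 : H)))

/-- The source map `ε_s(h) = 1₁ ε(h 1₂)` of a weak bialgebra. -/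
def wεs (h : H) : H :=
  (TensorProduct.rid k H)
    ((TensorProduct.map (LinearMap.id) (counit (R := k) ∘ₗ LinearMap.mulLeft k h))
      (comul (R := k) (1 : H)))

/-- A weak Hopf algebra structure on an algebra `H` which is also a coalgebra:
the weak bialgebra axioms together with an antipode `S`. -/
structure WeakHopf : Type _ where
  /-- Δ is multiplicative -/
  comul_mul : ∀ h g : H, comul (R := k) (h * g) = comul (R := k) h * comul (R := k) g
  /-- ε(hgl) = Σ ε(h g₁) ε(g₂ l) -/
  counit_weak_mul : ∀ h g l : H, counit (R := k) (h * g * l)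
      = LinearMap.mul' k k
          ((TensorProduct.map (counit (R := k) ∘ₗ LinearMap.mulLeft k h)
              (counit (R := k) ∘ₗ LinearMap.mulRight k l)) (comul (R := k) g))
  /-- ε(hgl) = Σ ε(h g₂) ε(g₁ l) -/
  counit_weak_mul' : ∀ h g l : H, counit (R := k) (h * g * l)
      = LinearMap.mul' k k
          ((TensorProduct.map (counit (R := k) ∘ₗ LinearMap.mulLeft k h)
              (counit (R := k) ∘ₗ LinearMap.mulRight k l))
            ((TensorProduct.comm k H H) (comul (R := k) g)))
  /-- (1 ⊗ Δ(1))(Δ(1) ⊗ 1) = Δ²(1) -/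
  comul_one_left :
      ((1 : H) ⊗ₜ[k] comul (R := k) (1 : H))
          * ((TensorProduct.assoc k H H H) (comul (R := k) (1 : H) ⊗ₜ[k] (1 : H)))
        = (LinearMap.lTensor H (comul (R := k))) (comul (R := k) (1 : H))
  /-- (Δ(1) ⊗ 1)(1 ⊗ Δ(1)) = Δ²(1) -/
  comul_one_right :
      ((TensorProduct.assoc k H H H) (comul (R := k) (1 : H) ⊗ₜ[k] (1 : H)))
          * ((1 : H) ⊗ₜ[k] comul (R := k) (1 : H))
        = (LinearMap.lTensor H (comul (R := k))) (comul (R := k) (1 : H))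
  /-- the antipode -/
  S : H →ₗ[k] H
  /-- Σ h₁ S(h₂) = ε_t(h) -/
  antipode_t : ∀ h : H,
      LinearMap.mul' k H ((LinearMap.lTensor H S) (comul (R := k) h)) = wεt k H h
  /-- Σ S(h₁) h₂ = ε_s(h) -/
  antipode_s : ∀ h : H,
      LinearMap.mul' k H ((LinearMap.rTensor H S) (comul (R := k) h)) = wεs k H h
  /-- Σ S(h₁) h₂ S(h₃) = S(h) -/
  antipode_mid : ∀ h : H,
      LinearMap.mul' k H
        ((TensorProduct.map S (LinearMap.mul' k H ∘ₗ LinearMap.lTensor H S))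
          ((LinearMap.lTensor H (comul (R := k))) (comul (R := k) h))) = S h

end WeakHopfDefs

section Actions

variable (H : Type*) [Ring H] [Algebra k H] [Coalgebra k H]
variable (C : Type*) [AddCommGroup C] [Module k C] [Coalgebra k C]

/-- The Sweedler sum `Σ (h g₁ · c₁) ε(g₂ · c₂)` appearing in (PMC3). -/
def pmc3RHS (act : H →ₗ[k] C →ₗ[k] C) (h g : H) (c : C) : C :=
  (TensorProduct.rid k C)
    ((TensorProduct.map
        ((TensorProduct.lift act) ∘ₗ (LinearMap.rTensor C (LinearMap.mulLeft k h)))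
        (counit (R := k) ∘ₗ (TensorProduct.lift act)))
      ((TensorProduct.tensorTensorTensorComm k H H C C)
        (comul (R := k) g ⊗ₜ[k] comul (R := k) c)))

/-- The Sweedler sum `Σ ε(g₁ · c₁) (h g₂ · c₂)` appearing in the symmetry condition. -/
def pmc3symRHS (act : H →ₗ[k] C →ₗ[k] C) (h g : H) (c : C) : C :=
  (TensorProduct.lid k C)
    ((TensorProduct.map
        (counit (R := k) ∘ₗ (TensorProduct.lift act))
        ((TensorProduct.lift act) ∘ₗ (LinearMap.rTensor C (LinearMap.mulLeft k h))))
      ((TensorProduct.tensorTensorTensorComm k H H C C)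
        (comul (R := k) g ⊗ₜ[k] comul (R := k) c)))

/-- (MC2)/(PMC2): `Δ(h·c) = (h₁·c₁) ⊗ (h₂·c₂)`. -/
def SweedlerComulCompat (act : H →ₗ[k] C →ₗ[k] C) : Prop :=
  ∀ (h : H) (c : C),
    comul (R := k) (act h c)
      = (TensorProduct.map (TensorProduct.lift act) (TensorProduct.lift act))
          ((TensorProduct.tensorTensorTensorComm k H H C C)
            (comul (R := k) h ⊗ₜ[k] comul (R := k) c))

/-- `C` is a left partial `H`-module coalgebra via `act` (`act h c = h · c`). -/
structure IsPartialModuleCoalgebra (act : H →ₗ[k] C →ₗ[k] C) : Prop where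
  pmc1 : ∀ c : C, act 1 c = c
  pmc2 : SweedlerComulCompat k H C act
  pmc3 : ∀ (h g : H) (c : C), act h (act g c) = pmc3RHS k H C act h g c

/-- `C` is a symmetric left partial `H`-module coalgebra via `act`. -/
structure IsSymmetricPartialModuleCoalgebra (act : H →ₗ[k] C →ₗ[k] C)
    extends IsPartialModuleCoalgebra k H C act : Prop where
  pmc3sym : ∀ (h g : H) (c : C), act h (act g c) = pmc3symRHS k H C act h g c

/-- `C` is a left `H`-module coalgebra via `act`. -/
structure IsModuleCoalgebra (act : H →ₗ[k] C →ₗ[k] C) : Prop where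
  mc1 : ∀ c : C, act 1 c = c
  mc2 : SweedlerComulCompat k H C act
  mc3 : ∀ (h g : H) (c : C), act h (act g c) = act (h * g) c
  mc4 : ∀ (h : H) (c : C), counit (R := k) (act h c) = counit (R := k) (act (wεs k H h) c)

end Actions

end

/-- If `H = H_t`, then every left partial `H`-module coalgebra is a left
`H`-module coalgebra via the same action map. -/
theorem partial_is_global_of_target_eq_top
    (k : Type*) [Field k] (H : Type*) [Ring H] [Algebra k H] [Coalgebra k H]
    (wh : WeakHopf k H) (hHt : ∀ h : H, h ∈ Set.range (wεt k H))
    (C : Type*) [AddCommGroup C] [Module k C] [Coalgebra k C]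
    (act : H →ₗ[k] C →ₗ[k] C)
    (hp : IsPartialModuleCoalgebra k H C act) :
    IsModuleCoalgebra k H C act := by
  classical
  obtain ⟨E, he⟩ := TensorProduct.exists_finset (comul (R := k) (1 : H))
  -- pointwise formulas for the target and source maps
  have hwt : ∀ h : H, wεt k H h = ∑ p ∈ E, counit (R := k) (p.1 * h) • p.2 := by
    intro h
    rw [wεt, he, map_sum, map_sum]
    simp only [TensorProduct.map_tmul, LinearMap.coe_comp, Function.comp_apply,
      LinearMap.mulRight_apply, LinearMap.id_coe, id_eq, TensorProduct.lid_tmul]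
  have hws : ∀ h : H, wεs k H h = ∑ p ∈ E, counit (R := k) (h * p.2) • p.1 := by
    intro h
    rw [wεs, he, map_sum, map_sum]
    simp only [TensorProduct.map_tmul, LinearMap.coe_comp, Function.comp_apply,
      LinearMap.mulLeft_apply, LinearMap.id_coe, id_eq, TensorProduct.rid_tmul]
  -- expanded form of the two Δ²(1) axioms
  have hL1 : ∑ q ∈ E, ∑ p ∈ E, q.1 ⊗ₜ[k] ((p.1 * q.2) ⊗ₜ[k] p.2)
      = ∑ q ∈ E, q.1 ⊗ₜ[k] comul (R := k) q.2 := by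
    have h1 := wh.comul_one_left
    rw [he] at h1
    simp only [TensorProduct.sum_tmul, TensorProduct.tmul_sum, map_sum,
      TensorProduct.assoc_tmul, Finset.sum_mul, Finset.mul_sum,
      Algebra.TensorProduct.tmul_mul_tmul, one_mul, mul_one,
      LinearMap.lTensor_tmul] at h1
    exact h1
  have hL2 : ∑ q ∈ E, ∑ p ∈ E, p.1 ⊗ₜ[k] ((p.2 * q.1) ⊗ₜ[k] q.2)
      = ∑ p ∈ E, p.1 ⊗ₜ[k] comul (R := k) p.2 := by
    have h2 := wh.comul_one_right
    rw [he] at h2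
    simp only [TensorProduct.sum_tmul, TensorProduct.tmul_sum, map_sum,
      TensorProduct.assoc_tmul, Finset.sum_mul, Finset.mul_sum,
      Algebra.TensorProduct.tmul_mul_tmul, one_mul, mul_one,
      LinearMap.lTensor_tmul] at h2
    exact h2
  -- (id ⊗ εt)(Δ(1)) = Δ(1)
  have hGL : ∑ q ∈ E, q.1 ⊗ₜ[k] wεt k H q.2 = ∑ q ∈ E, q.1 ⊗ₜ[k] q.2 := by
    have h3 := congrArg (⇑(LinearMap.lTensor H
      ((TensorProduct.lid k H).toLinearMap ∘ₗ LinearMap.rTensor H (counit (R := k))))) hL1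
    simp only [map_sum, LinearMap.lTensor_tmul, LinearMap.coe_comp, Function.comp_apply,
      LinearMap.rTensor_tmul, LinearEquiv.coe_coe, TensorProduct.lid_tmul,
      Coalgebra.rTensor_counit_comul, TensorProduct.tmul_smul, one_smul] at h3
    rw [← h3]
    refine Finset.sum_congr rfl fun q _ => ?_
    rw [hwt, TensorProduct.tmul_sum]
    simp only [TensorProduct.tmul_smul]
  -- εt is idempotent, hence (by hHt) the identity
  have hid : ∀ h : H, wεt k H h = h := by
    intro h
    obtain ⟨h', rfl⟩ := hHt h
    have h4 := congrArg (⇑((TensorProduct.lid k H).toLinearMap ∘ₗ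
      TensorProduct.map (counit (R := k) ∘ₗ LinearMap.mulRight k h') LinearMap.id)) hGL
    simp only [map_sum, LinearMap.coe_comp, Function.comp_apply, TensorProduct.map_tmul,
      LinearMap.mulRight_apply, LinearMap.id_coe, id_eq, LinearEquiv.coe_coe,
      TensorProduct.lid_tmul] at h4
    -- h4 : ∑ q, ε(q.1 h') • wεt q.2 = ∑ q, ε(q.1 h') • q.2
    have h5 : wεt k H (wεt k H h') = ∑ q ∈ E, counit (R := k) (q.1 * h') • wεt k H q.2 := by
      rw [hwt (wεt k H h'), hwt h']
      simp only [Finset.mul_sum, mul_smul_comm, map_sum, map_smul, smul_eq_mul,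
        Finset.sum_smul, smul_smul]
      rw [Finset.sum_comm]
      simp only [hwt, Finset.smul_sum, smul_smul]
    rw [h5, h4, ← hwt h']
  have hE1 : ∀ z : H, ∑ p ∈ E, counit (R := k) (p.1 * z) • p.2 = z :=
    fun z => (hwt z).symm.trans (hid z)
  -- Δ(z) = (z ⊗ 1) Δ(1)
  have hcm : ∀ z : H, comul (R := k) z = ∑ q ∈ E, (z * q.1) ⊗ₜ[k] q.2 := by
    intro z
    have h6 := congrArg (⇑((TensorProduct.lid k (H ⊗[k] H)).toLinearMap ∘ₗ
      TensorProduct.map (counit (R := k) ∘ₗ LinearMap.mulRight k z)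
        (LinearMap.id : H ⊗[k] H →ₗ[k] H ⊗[k] H))) hL2
    simp only [map_sum, LinearMap.coe_comp, Function.comp_apply, TensorProduct.map_tmul,
      LinearMap.mulRight_apply, LinearMap.id_coe, id_eq, LinearEquiv.coe_coe,
      TensorProduct.lid_tmul] at h6
    -- h6 : ∑ p ∑ q, ε(p.1 z) • ((p.2*q.1) ⊗ q.2) = ∑ p, ε(p.1 z) • comul p.2
    calc comul (R := k) z
        = ∑ p ∈ E, counit (R := k) (p.1 * z) • comul (R := k) p.2 := by
          conv_lhs => rw [← hE1 z]
          rw [map_sum]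
          simp only [map_smul]
      _ = ∑ q ∈ E, ∑ p ∈ E, counit (R := k) (p.1 * z) • ((p.2 * q.1) ⊗ₜ[k] q.2) := h6.symm
      _ = ∑ q ∈ E, (z * q.1) ⊗ₜ[k] q.2 := by
          refine Finset.sum_congr rfl fun q _ => ?_
          simp only [TensorProduct.smul_tmul']
          rw [← TensorProduct.sum_tmul]
          congr 1
          simp only [← smul_mul_assoc]
          rw [← Finset.sum_mul, hE1 z]
  -- separation : z = Σ ε(z 1₁) 1₂
  have hE2 : ∀ z : H, ∑ q ∈ E, counit (R := k) (z * q.1) • q.2 = z := by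
    intro z
    have h7 := congrArg (⇑((TensorProduct.lid k H).toLinearMap ∘ₗ
      LinearMap.rTensor H (counit (R := k)))) (hcm z)
    simp only [map_sum, LinearMap.coe_comp, Function.comp_apply, LinearMap.rTensor_tmul,
      LinearEquiv.coe_coe, TensorProduct.lid_tmul, Coalgebra.rTensor_counit_comul] at h7
    simpa using h7.symm
  -- ε(ε_s(g) y) = ε(g y)
  have hT1 : ∀ g y : H, counit (R := k) (wεs k H g * y) = counit (R := k) (g * y) := by
    intro g y
    have h8 := wh.counit_weak_mul' g 1 y
    rw [mul_one, he] at h8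
    simp only [map_sum, TensorProduct.comm_tmul, TensorProduct.map_tmul, LinearMap.coe_comp,
      Function.comp_apply, LinearMap.mulLeft_apply, LinearMap.mulRight_apply,
      LinearMap.mul'_apply] at h8
    -- h8 : ε(g y) = ∑ p, ε(g p.2) * ε(p.1 y)
    rw [hws g, Finset.sum_mul, map_sum]
    simp only [smul_mul_assoc, map_smul, smul_eq_mul]
    exact h8.symm
  -- ε_s = id
  have hεs : ∀ h : H, wεs k H h = h := by
    intro h
    have hx : ∀ y : H, counit (R := k) ((wεs k H h - h) * y) = 0 := by
      intro y
      rw [sub_mul, map_sub, hT1, sub_self]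
    have h9 := hE2 (wεs k H h - h)
    simp only [hx, zero_smul, Finset.sum_const_zero] at h9
    have := sub_eq_zero.mp h9.symm
    exact this
  -- assemble
  refine ⟨hp.pmc1, hp.pmc2, ?_, ?_⟩
  · intro h g c
    rw [hp.pmc3 h g c]
    have hr : act (h * g) c = pmc3RHS k H C act (h * g) 1 c := by
      conv_lhs => rw [show c = act 1 c from (hp.pmc1 c).symm]
      exact hp.pmc3 (h * g) 1 c
    rw [hr]
    have key : ∀ (p : H × H) (t : C ⊗[k] C),
        (TensorProduct.map
          ((TensorProduct.lift act) ∘ₗ (LinearMap.rTensor C (LinearMap.mulLeft k h)))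
          (counit (R := k) ∘ₗ (TensorProduct.lift act)))
          ((TensorProduct.tensorTensorTensorComm k H H C C) (((g * p.1) ⊗ₜ[k] p.2) ⊗ₜ[k] t))
        = (TensorProduct.map
          ((TensorProduct.lift act) ∘ₗ (LinearMap.rTensor C (LinearMap.mulLeft k (h * g))))
          (counit (R := k) ∘ₗ (TensorProduct.lift act)))
          ((TensorProduct.tensorTensorTensorComm k H H C C) ((p.1 ⊗ₜ[k] p.2) ⊗ₜ[k] t)) := by
      intro p t
      induction t using TensorProduct.induction_on with
      | zero => simp
      | tmul c1 c2 =>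
          simp only [TensorProduct.tensorTensorTensorComm_tmul, TensorProduct.map_tmul,
            LinearMap.coe_comp, Function.comp_apply, LinearMap.rTensor_tmul,
            LinearMap.mulLeft_apply, TensorProduct.lift.tmul, mul_assoc]
      | add x y hx hy =>
          simp only [TensorProduct.tmul_add, map_add, hx, hy]
    simp only [pmc3RHS]
    rw [hcm g, he, TensorProduct.sum_tmul, TensorProduct.sum_tmul, map_sum, map_sum,
      map_sum, map_sum, map_sum, map_sum]
    exact Finset.sum_congr rfl fun p _ => congrArg _ (key p _)
  · intro h c
    rw [hεs h]
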